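/- Nonnegativity of the informativeness measure: for a joint full-support PMF p_{XA} on finite X × A with marginals p_X, p_A and conditionals p_{X|A}, and PMFs r¹,…,r^d on X, the quantity 𝒟 := D_{α,α₀}(p_{X|A}, r¹,…,r^d | p_A) − D_α(p_X, r¹,…,r^d) satisfies 𝒟 ≥ 0, for admissible orders with α₀ = maxₖ αₖ. -/

import Mathlib

open Finset Real

/-- Minkowski inequality for finitely many nonnegative functions, `1 ≤ p`. -/
lemma minkowski_many {ι Y : Type*} [DecidableEq ι] (t : Finset Y) {p : ℝ} (hp : 1 ≤ p)
    (s : Finset ι) (f : ι → Y → ℝ) (hf : ∀ i x, 0 ≤ f i x) :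
    (∑ x ∈ t, (∑ i ∈ s, f i x) ^ p) ^ (1 / p) ≤
      ∑ i ∈ s, (∑ x ∈ t, f i x ^ p) ^ (1 / p) := by
  have hp0 : p ≠ 0 := by linarith
  induction s using Finset.induction_on with
  | empty => simp [Real.zero_rpow hp0, Real.zero_rpow (inv_ne_zero hp0)]
  | insert a s ha ih =>
      simp only [Finset.sum_insert ha]
      refine le_trans (Real.Lp_add_le_of_nonneg (s := t) (f := f a)
        (g := fun x => ∑ i ∈ s, f i x) hp (fun x _ => hf a x)
        (fun x _ => Finset.sum_nonneg fun i _ => hf i x)) ?_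
      exact add_le_add_right ih _

/-- Reverse Minkowski inequality for finitely many nonnegative functions, `0 < p ≤ 1`. -/
lemma minkowski_many_rev {ι Y : Type*} [DecidableEq Y] (t : Finset Y) {p : ℝ}
    (hp0 : 0 < p) (hp : p ≤ 1)
    (s : Finset ι) (f : ι → Y → ℝ) (hf : ∀ i x, 0 ≤ f i x) :
    ∑ i ∈ s, (∑ x ∈ t, f i x ^ p) ^ (1 / p) ≤
      (∑ x ∈ t, (∑ i ∈ s, f i x) ^ p) ^ (1 / p) := by
  have hpne : p ≠ 0 := hp0.ne'
  have hq : (1 : ℝ) ≤ 1 / p := by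
    rw [le_div_iff₀ hp0]; linarith
  have key := minkowski_many s hq t (fun x i => f i x ^ p)
    (fun x i => Real.rpow_nonneg (hf i x) p)
  rw [one_div_one_div] at key
  have hrw : ∀ x ∈ t, (∑ i ∈ s, (f i x ^ p) ^ (1 / p)) ^ p = (∑ i ∈ s, f i x) ^ p := by
    intro x _
    congr 1
    refine Finset.sum_congr rfl fun i _ => ?_
    rw [one_div, Real.rpow_rpow_inv (hf i x) hpne]
  rw [Finset.sum_congr rfl hrw] at key
  have hL : 0 ≤ ∑ i ∈ s, (∑ x ∈ t, f i x ^ p) ^ (1 / p) :=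
    Finset.sum_nonneg fun i _ => Real.rpow_nonneg
      (Finset.sum_nonneg fun x _ => Real.rpow_nonneg (hf i x) p) _
  have h2 := Real.rpow_le_rpow (Real.rpow_nonneg hL p) key (by positivity : (0:ℝ) ≤ 1 / p)
  simp only [one_div] at h2 hL ⊢
  rwa [Real.rpow_rpow_inv hL hpne] at h2

/-- Nonnegativity of the informativeness measure: for a full-support joint
PMF `p_{XA}`, the conditional multivariate Rényi divergence (given the
marginal `p_A`, with conditionals `p_{X|A}`) dominates the unconditional one
with the marginal `p_X`, so their difference is nonnegative. -/
theorem informativeness_measure_nonneg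
    {X A : Type*} [Fintype X] [Fintype A] [Nonempty X] [Nonempty A] (d : ℕ)
    (pXA : X → A → ℝ) (r : Fin d → X → ℝ)
    (α : Fin (d + 1) → ℝ)
    (hpXA_pos : ∀ x a, 0 < pXA x a) (hpXA_sum : ∑ x, ∑ a, pXA x a = 1)
    (hr_pos : ∀ k x, 0 < r k x) (hr_sum : ∀ k, ∑ x, r k x = 1)
    (hα_sum : ∑ k, α k = 1)
    (hα_cond : (∀ k, 0 ≤ α k) ∨
      (1 < α 0 ∧ ∀ k : Fin d, α k.succ ≤ 0))
    (hα0_max : ∀ k, α k ≤ α 0) (hα0_ne : α 0 ≠ 1) :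
    0 ≤
      (α 0 / (α 0 - 1)) * Real.log
          (∑ a, (∑ x, pXA x a) *
            (∑ x, ((pXA x a / (∑ x', pXA x' a)) ^ (α 0) *
              ∏ k : Fin d, (r k x) ^ (α k.succ))) ^ (1 / α 0)) -
        (1 / (α 0 - 1)) * Real.log
          (∑ x, ((∑ a, pXA x a) ^ (α 0) *
            ∏ k : Fin d, (r k x) ^ (α k.succ))) := by
  classical
  set p := α 0 with hpdef
  have hp_pos : 0 < p := by
    rcases hα_cond with h | h
    · by_contra hle
      push_neg at hle
      have : ∑ k, α k ≤ 0 := Finset.sum_nonpos fun k _ => le_trans (hα0_max k) hle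
      linarith
    · linarith [h.1]
  have hpne : p ≠ 0 := hp_pos.ne'
  set c : X → ℝ := fun x => ∏ k : Fin d, (r k x) ^ (α k.succ) with hcdef
  have hc_pos : ∀ x, 0 < c x := fun x =>
    Finset.prod_pos fun k _ => Real.rpow_pos_of_pos (hr_pos k x) _
  set g : A → X → ℝ := fun a x => pXA x a * (c x) ^ (1 / p) with hgdef
  have hg_pos : ∀ a x, 0 < g a x := fun a x =>
    mul_pos (hpXA_pos x a) (Real.rpow_pos_of_pos (hc_pos x) _)
  have hgp : ∀ a x, g a x ^ p = pXA x a ^ p * c x := by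
    intro a x
    simp only [hgdef]
    rw [Real.mul_rpow (hpXA_pos x a).le (Real.rpow_nonneg (hc_pos x).le _),
      ← Real.rpow_mul (hc_pos x).le, one_div_mul_cancel hpne, Real.rpow_one]
  set S : ℝ := ∑ a, (∑ x, g a x ^ p) ^ (1 / p) with hSdef
  set T : ℝ := ∑ x, (∑ a, g a x) ^ p with hTdef
  have hS_pos : 0 < S :=
    Finset.sum_pos (fun a _ => Real.rpow_pos_of_pos
      (Finset.sum_pos (fun x _ => Real.rpow_pos_of_pos (hg_pos a x) _) univ_nonempty) _)
      univ_nonempty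
  have hT_pos : 0 < T :=
    Finset.sum_pos (fun x _ => Real.rpow_pos_of_pos
      (Finset.sum_pos (fun a _ => hg_pos a x) univ_nonempty) _) univ_nonempty
  have hfirst : (∑ a, (∑ x, pXA x a) *
      (∑ x, ((pXA x a / (∑ x', pXA x' a)) ^ p * c x)) ^ (1 / p)) = S := by
    refine Finset.sum_congr rfl fun a _ => ?_
    have hPa : 0 < ∑ x', pXA x' a := Finset.sum_pos (fun x _ => hpXA_pos x a) univ_nonempty
    have h1 : ∀ x, (pXA x a / (∑ x', pXA x' a)) ^ p * c x
        = (pXA x a ^ p * c x) / (∑ x', pXA x' a) ^ p := by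
      intro x
      rw [Real.div_rpow (hpXA_pos x a).le hPa.le]
      ring
    rw [Finset.sum_congr rfl fun x _ => h1 x, ← Finset.sum_div,
      Real.div_rpow (Finset.sum_nonneg fun x _ =>
          (mul_pos (Real.rpow_pos_of_pos (hpXA_pos x a) _) (hc_pos x)).le)
        (Real.rpow_nonneg hPa.le _),
      one_div, Real.rpow_rpow_inv hPa.le hpne, mul_comm, div_mul_cancel₀ _ hPa.ne', ← one_div]
    congr 1
    exact Finset.sum_congr rfl fun x _ => (hgp a x).symm
  have hsecond : (∑ x, ((∑ a, pXA x a) ^ p * c x)) = T := by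
    refine Finset.sum_congr rfl fun x _ => ?_
    have hsum : ∑ a, g a x = (∑ a, pXA x a) * (c x) ^ (1 / p) := by
      simp only [hgdef]; rw [← Finset.sum_mul]
    rw [hsum, Real.mul_rpow (Finset.sum_nonneg fun a _ => (hpXA_pos x a).le)
      (Real.rpow_nonneg (hc_pos x).le _), ← Real.rpow_mul (hc_pos x).le,
      one_div_mul_cancel hpne, Real.rpow_one]
  rw [hfirst, hsecond]
  have hlogT : Real.log T = p * Real.log (T ^ (1 / p)) := by
    rw [Real.log_rpow hT_pos]
    field_simp
  have hTr_pos : 0 < T ^ (1 / p) := Real.rpow_pos_of_pos hT_pos _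
  have hgoal : (p / (p - 1)) * Real.log S - (1 / (p - 1)) * Real.log T
      = (p / (p - 1)) * (Real.log S - Real.log (T ^ (1 / p))) := by
    rw [hlogT]; ring
  rw [hgoal]
  rcases lt_or_gt_of_ne hα0_ne with hlt | hgt
  · have hmink : S ≤ T ^ (1 / p) :=
      minkowski_many_rev Finset.univ hp_pos hlt.le Finset.univ g (fun a x => (hg_pos a x).le)
    have hlog : Real.log S - Real.log (T ^ (1 / p)) ≤ 0 :=
      sub_nonpos.mpr (Real.log_le_log hS_pos hmink)
    have hcoef : p / (p - 1) ≤ 0 :=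
      div_nonpos_iff.mpr (Or.inl ⟨hp_pos.le, by linarith⟩)
    nlinarith [mul_nonneg (neg_nonneg.2 hcoef) (neg_nonneg.2 hlog)]
  · have hmink : T ^ (1 / p) ≤ S :=
      minkowski_many Finset.univ hgt.le Finset.univ g (fun a x => (hg_pos a x).le)
    have hlog : 0 ≤ Real.log S - Real.log (T ^ (1 / p)) :=
      sub_nonneg.mpr (Real.log_le_log hTr_pos hmink)
    have hcoef : 0 ≤ p / (p - 1) := by
      apply div_nonneg hp_pos.le; linarith
    exact mul_nonneg hcoef hlog
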